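/- Let k be a positive integer, T a subset of {1,...,k}, and ρ a permutation of {1,...,k} that is order-preserving on T (i.e., for all i, j ∈ T with i < j one has ρ(i) < ρ(j)). Then ρ can be written as a product of adjacent transpositions ρ = t₁ ∘ t₂ ∘ ⋯ ∘ tₘ (each tₙ transposing two consecutive integers) such that for each 1 ≤ n ≤ m, the transposition tₙ does not transpose two elements of the set tₙ₊₁ ∘ ⋯ ∘ tₘ (T) (the image of T under the composite of the later transpositions). -/

import Mathlib

private def invCount {k : ℕ} (ρ : Equiv.Perm (Fin k)) : ℕ :=
  ((Finset.univ : Finset (Fin k × Fin k)).filter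
    (fun p => p.1 < p.2 ∧ ρ p.2 < ρ p.1)).card

private lemma exists_descent {k : ℕ} (ρ : Equiv.Perm (Fin k)) (hne : ρ ≠ 1) :
    ∃ a b : Fin k, (a : ℕ) + 1 = (b : ℕ) ∧ ρ.symm b < ρ.symm a := by
  by_contra h
  push_neg at h
  apply hne
  rcases k with _ | m
  · exact Subsingleton.elim _ _
  have hmono : StrictMono ρ.symm := by
    rw [Fin.strictMono_iff_lt_succ]
    intro i
    have hab : ((i.castSucc : Fin (m+1)) : ℕ) + 1 = ((i.succ : Fin (m+1)) : ℕ) := by simp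
    have := h _ _ hab
    have hne' : ρ.symm i.castSucc ≠ ρ.symm i.succ := by
      intro he
      have : (i.castSucc : Fin (m+1)) = i.succ := ρ.symm.injective he
      have := congrArg Fin.val this
      simp at this
    exact lt_of_le_of_ne this hne'
  have : ρ.symm = (1 : Equiv.Perm (Fin (m+1))) := by
    ext x
    have := Fin.coe_orderIso_apply ⟨ρ.symm, @fun a b => hmono.le_iff_le⟩ x
    exact this
  calc ρ = ρ.symm.symm := rfl
    _ = 1 := by rw [this]; rfl

private lemma swap_lt {k : ℕ} {a b x y : Fin k} (hab : (a : ℕ) + 1 = (b : ℕ))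
    (hxy : x < y) (hbad : ¬(x = a ∧ y = b)) :
    Equiv.swap a b x < Equiv.swap a b y := by
  have hbad' : ¬((x : ℕ) = (a : ℕ) ∧ (y : ℕ) = (b : ℕ)) := fun ⟨h1, h2⟩ =>
    hbad ⟨Fin.val_injective h1, Fin.val_injective h2⟩
  rw [Fin.lt_def] at hxy
  rw [Equiv.swap_apply_def, Equiv.swap_apply_def, Fin.lt_def]
  split_ifs <;> simp_all [Fin.ext_iff] <;> omega

private lemma inv_decrease {k : ℕ} (ρ : Equiv.Perm (Fin k)) {a b : Fin k}
    (hab : (a : ℕ) + 1 = (b : ℕ)) (hd : ρ.symm b < ρ.symm a) :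
    invCount (Equiv.swap a b * ρ) < invCount ρ := by
  apply Finset.card_lt_card
  constructor
  · intro p hp
    simp only [Finset.mem_filter, Finset.mem_univ, true_and] at hp ⊢
    refine ⟨hp.1, ?_⟩
    by_contra hcon
    push_neg at hcon
    rcases lt_or_eq_of_le hcon with hlt | heq
    · have hbad : ¬(ρ p.1 = a ∧ ρ p.2 = b) := by
        rintro ⟨h1, h2⟩
        have : p.1 = ρ.symm a := by rw [← h1]; simp
        have h2' : p.2 = ρ.symm b := by rw [← h2]; simp
        rw [this, h2'] at hp
        exact absurd hp.1 (not_lt.2 hd.le)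
      have := swap_lt hab hlt hbad
      simp only [Equiv.Perm.mul_apply] at hp
      exact absurd hp.2 (not_lt.2 this.le)
    · have : p.1 = p.2 := ρ.injective heq
      exact absurd (this ▸ hp.1) (lt_irrefl _)
  · intro hsub
    have hmem : (ρ.symm b, ρ.symm a) ∈ (Finset.univ : Finset (Fin k × Fin k)).filter
        (fun p => p.1 < p.2 ∧ ρ p.2 < ρ p.1) := by
      simp only [Finset.mem_filter, Finset.mem_univ, true_and]
      refine ⟨hd, ?_⟩
      simp only [Equiv.apply_symm_apply]
      rw [Fin.lt_def]; omega
    have : (ρ.symm b, ρ.symm a) ∈ (Finset.univ : Finset (Fin k × Fin k)).filter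
        (fun p => p.1 < p.2 ∧ (Equiv.swap a b * ρ) p.2 < (Equiv.swap a b * ρ) p.1) := hsub hmem
    rw [Finset.mem_filter] at this
    simp only [Finset.mem_filter, Finset.mem_univ, true_and, Equiv.Perm.mul_apply,
      Equiv.apply_symm_apply, Equiv.swap_apply_left, Equiv.swap_apply_right] at this
    have h2 := this.2
    rw [Fin.lt_def] at h2
    omega

private lemma main_aux {k : ℕ} (T : Set (Fin k)) :
    ∀ (N : ℕ) (ρ : Equiv.Perm (Fin k)), invCount ρ ≤ N →
    (∀ i j, i ∈ T → j ∈ T → i < j → ρ i < ρ j) →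
    ∃ L : List (Equiv.Perm (Fin k)),
      ρ = L.prod ∧
      ∀ (n : ℕ) (hn : n < L.length),
        ∃ (a b : Fin k), (a : ℕ) + 1 = (b : ℕ) ∧
          L.get ⟨n, hn⟩ = Equiv.swap a b ∧
          ¬(a ∈ ⇑(L.drop (n + 1)).prod '' T ∧ b ∈ ⇑(L.drop (n + 1)).prod '' T) := by
  intro N
  induction N with
  | zero =>
    intro ρ hN hρ
    rcases eq_or_ne ρ 1 with rfl | hne
    · exact ⟨[], rfl, fun n hn => absurd hn (by simp)⟩
    · obtain ⟨a, b, hab, hd⟩ := exists_descent ρ hne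
      exact absurd (Nat.lt_of_lt_of_le (inv_decrease ρ hab hd) hN) (Nat.not_lt_zero _)
  | succ N ih =>
    intro ρ hN hρ
    rcases eq_or_ne ρ 1 with rfl | hne
    · exact ⟨[], rfl, fun n hn => absurd hn (by simp)⟩
    obtain ⟨a, b, hab, hd⟩ := exists_descent ρ hne
    set ρ' := Equiv.swap a b * ρ with hρ'def
    have hnotboth : ¬(a ∈ ⇑ρ '' T ∧ b ∈ ⇑ρ '' T) := by
      rintro ⟨⟨i, hi, hia⟩, ⟨j, hj, hjb⟩⟩
      have hij : i < j := by
        rcases lt_trichotomy i j with h | h | h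
        · exact h
        · rw [h, hjb] at hia; rw [Fin.lt_def] at *; omega
        · have := hρ j i hj hi h
          rw [hia, hjb] at this
          rw [Fin.lt_def] at *; omega
      have hi' : i = ρ.symm a := by rw [← hia]; simp
      have hj' : j = ρ.symm b := by rw [← hjb]; simp
      rw [hi', hj'] at hij
      exact absurd hij (not_lt.2 hd.le)
    have hρ'mono : ∀ i j, i ∈ T → j ∈ T → i < j → ρ' i < ρ' j := by
      intro i j hi hj hij
      simp only [hρ'def, Equiv.Perm.mul_apply]
      apply swap_lt hab (hρ i j hi hj hij)
      rintro ⟨h1, h2⟩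
      exact hnotboth ⟨⟨i, hi, h1⟩, ⟨j, hj, h2⟩⟩
    have hinv : invCount ρ' ≤ N := Nat.lt_succ_iff.mp
      (Nat.lt_of_lt_of_le (inv_decrease ρ hab hd) hN)
    obtain ⟨L', hL'prod, hL'cond⟩ := ih ρ' hinv hρ'mono
    refine ⟨Equiv.swap a b :: L', ?_, ?_⟩
    · rw [List.prod_cons, ← hL'prod, hρ'def, ← mul_assoc, Equiv.swap_mul_self, one_mul]
    · intro n hn
      match n with
      | 0 =>
        refine ⟨a, b, hab, rfl, ?_⟩
        simp only [List.drop_succ_cons, List.drop_zero, ← hL'prod]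
        intro ⟨ha, hb⟩
        apply hnotboth
        rw [hρ'def] at ha hb
        have himg : ⇑(Equiv.swap a b * ρ) '' T = ⇑(Equiv.swap a b) '' (⇑ρ '' T) := by
          rw [← Set.image_comp]; rfl
        rw [himg] at ha hb
        obtain ⟨x, hx, hxa⟩ := ha
        obtain ⟨y, hy, hyb⟩ := hb
        have hx' : x = b := by
          have := congrArg (Equiv.swap a b) hxa
          rwa [Equiv.swap_apply_self, Equiv.swap_apply_left] at this
        have hy' : y = a := by
          have := congrArg (Equiv.swap a b) hyb
          rwa [Equiv.swap_apply_self, Equiv.swap_apply_right] at this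
        exact ⟨hy' ▸ hy, hx' ▸ hx⟩
      | n + 1 =>
        have hn' : n < L'.length := by simpa using hn
        obtain ⟨a', b', hab', hget, hcond⟩ := hL'cond n hn'
        exact ⟨a', b', hab', hget, by simpa using hcond⟩

theorem exists_adjacent_transposition_factorization {k : ℕ} (T : Set (Fin k))
    (ρ : Equiv.Perm (Fin k))
    (hρ : ∀ i j, i ∈ T → j ∈ T → i < j → ρ i < ρ j) :
    ∃ L : List (Equiv.Perm (Fin k)),
      ρ = L.prod ∧
      ∀ (n : ℕ) (hn : n < L.length),
        ∃ (a b : Fin k), (a : ℕ) + 1 = (b : ℕ) ∧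
          L.get ⟨n, hn⟩ = Equiv.swap a b ∧
          ¬(a ∈ ⇑(L.drop (n + 1)).prod '' T ∧ b ∈ ⇑(L.drop (n + 1)).prod '' T) := by
  exact main_aux T (invCount ρ) ρ le_rfl hρ
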